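/- Let 𝒳 be a nonempty type, n ≥ 1, and let M be a mechanism assigning to each dataset D ∈ 𝒳^n a probability measure M(D) on a measurable space Θ, satisfying ε-pure differential privacy with respect to replace-one neighbors: for all datasets D, D' ∈ 𝒳^n differing in exactly one coordinate and all measurable S, M(D)(S) ≤ exp(ε)·M(D')(S). Let K ≥ 2, let D₁,…,D_K ∈ 𝒳^n be datasets, and let E₁,…,E_K be pairwise disjoint measurable subsets of Θ such that M(D_j)(E_j) ≥ 1/2 for every j. Then log K ≤ n·ε + log 4. -/

import Mathlib

open MeasureTheory
open scoped ENNReal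

/-- Interpolating path of datasets used for the group-privacy argument. -/
def packingInterp {𝒳 : Type*} {n : ℕ} (A B : Fin n → 𝒳) (m : ℕ) : Fin n → 𝒳 :=
  fun k => if (k : ℕ) < m then B k else A k

/-- **Packing lower bound for pure DP (the packing argument of Section 7).**
If `M` is an `ε`-pure DP mechanism on datasets in `𝒳^n` (replace-one neighbors), and
`D₁,…,D_K` are datasets with pairwise disjoint measurable sets `E₁,…,E_K` such that
`M(D_j)(E_j) ≥ 1/2` for each `j`, then `log K ≤ n·ε + log 4`. -/
theorem packing_lower_bound
    {𝒳 : Type*} {Θ : Type*} [MeasurableSpace Θ]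
    (n : ℕ) (hn : 1 ≤ n) (ε : ℝ) (hε : 0 ≤ ε)
    (M : (Fin n → 𝒳) → Measure Θ)
    (hMprob : ∀ D, IsProbabilityMeasure (M D))
    (hDP : ∀ D D' : Fin n → 𝒳,
      (∃ i, D i ≠ D' i ∧ ∀ j, j ≠ i → D j = D' j) →
      ∀ S : Set Θ, MeasurableSet S → M D S ≤ ENNReal.ofReal (Real.exp ε) * M D' S)
    (K : ℕ) (hK : 2 ≤ K)
    (D : Fin K → Fin n → 𝒳) (E : Fin K → Set Θ)
    (hE : ∀ j, MeasurableSet (E j))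
    (hdisj : ∀ j j', j ≠ j' → Disjoint (E j) (E j'))
    (hacc : ∀ j, ENNReal.ofReal (1 / 2) ≤ M (D j) (E j)) :
    Real.log K ≤ (n : ℝ) * ε + Real.log 4 := by
  set c : ℝ≥0∞ := ENNReal.ofReal (Real.exp ε) with hc
  have hc1 : 1 ≤ c := by
    rw [hc, ENNReal.one_le_ofReal]
    exact Real.one_le_exp hε
  -- group privacy
  have key : ∀ (A B : Fin n → 𝒳) (S : Set Θ), MeasurableSet S →
      M A S ≤ c ^ n * M B S := by
    intro A B S hS
    set F : ℕ → (Fin n → 𝒳) := packingInterp A B with hF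
    have step : ∀ m, M (F m) S ≤ c * M (F (m + 1)) S := by
      intro m
      by_cases h : F m = F (m + 1)
      · rw [h]
        exact le_mul_of_one_le_left zero_le hc1
      · obtain ⟨k, hk⟩ := Function.ne_iff.mp h
        refine hDP _ _ ⟨k, hk, fun j hj => ?_⟩ S hS
        have hkm : (k : ℕ) = m := by
          by_contra hne
          apply hk
          simp only [hF, packingInterp]
          by_cases h1 : (k : ℕ) < m
          · rw [if_pos h1, if_pos (by omega : (k : ℕ) < m + 1)]
          · rw [if_neg h1, if_neg (by omega : ¬ (k : ℕ) < m + 1)]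
        have hjm : (j : ℕ) ≠ m := by
          intro he; exact hj (Fin.ext (by omega))
        simp only [hF, packingInterp]
        by_cases h1 : (j : ℕ) < m
        · rw [if_pos h1, if_pos (by omega : (j : ℕ) < m + 1)]
        · rw [if_neg h1, if_neg (by omega : ¬ (j : ℕ) < m + 1)]
    have iter : ∀ m, M (F 0) S ≤ c ^ m * M (F m) S := by
      intro m
      induction m with
      | zero => simp
      | succ m ih =>
        calc M (F 0) S ≤ c ^ m * M (F m) S := ih
        _ ≤ c ^ m * (c * M (F (m + 1)) S) := mul_le_mul_right (step m) _
        _ = c ^ (m + 1) * M (F (m + 1)) S := by ring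
    have hF0 : F 0 = A := by funext k; simp [hF, packingInterp]
    have hFn : F n = B := by funext k; simp [hF, packingInterp, k.isLt]
    have := iter n
    rwa [hF0, hFn] at this
  have j0 : Fin K := ⟨0, by omega⟩
  -- sum over j
  have hsum : ∑ j, M (D j0) (E j) ≤ 1 := by
    have := MeasureTheory.measure_iUnion (μ := M (D j0)) (f := E)
      (fun j j' hjj' => hdisj j j' hjj') hE
    rw [tsum_fintype] at this
    rw [← this]
    exact prob_le_one
  have hKhalf : (K : ℝ≥0∞) * ENNReal.ofReal (1 / 2) ≤ c ^ n := by
    calc (K : ℝ≥0∞) * ENNReal.ofReal (1 / 2)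
        = ∑ _j : Fin K, ENNReal.ofReal (1 / 2) := by
          simp [Finset.sum_const, mul_comm]
      _ ≤ ∑ j, M (D j) (E j) := Finset.sum_le_sum fun j _ => hacc j
      _ ≤ ∑ j, c ^ n * M (D j0) (E j) :=
          Finset.sum_le_sum fun j _ => key (D j) (D j0) (E j) (hE j)
      _ = c ^ n * ∑ j, M (D j0) (E j) := by rw [Finset.mul_sum]
      _ ≤ c ^ n * 1 := mul_le_mul_right hsum _
      _ = c ^ n := mul_one _
  -- convert to reals
  have hcn : c ^ n = ENNReal.ofReal (Real.exp ((n : ℝ) * ε)) := by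
    rw [hc, ← ENNReal.ofReal_pow (Real.exp_nonneg ε), ← Real.exp_nat_mul]
  have hreal : (K : ℝ) * (1 / 2) ≤ Real.exp ((n : ℝ) * ε) := by
    rw [hcn] at hKhalf
    have : ENNReal.ofReal ((K : ℝ) * (1 / 2)) ≤ ENNReal.ofReal (Real.exp ((n : ℝ) * ε)) := by
      rw [ENNReal.ofReal_mul (by positivity), ENNReal.ofReal_natCast]
      exact hKhalf
    exact (ENNReal.ofReal_le_ofReal_iff (Real.exp_nonneg _)).mp this
  have hKpos : (0 : ℝ) < K := by positivity
  have hK2 : (K : ℝ) ≤ 2 * Real.exp ((n : ℝ) * ε) := by linarith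
  calc Real.log K ≤ Real.log (2 * Real.exp ((n : ℝ) * ε)) :=
        Real.log_le_log hKpos hK2
    _ = Real.log 2 + (n : ℝ) * ε := by
        rw [Real.log_mul (by norm_num) (Real.exp_ne_zero _), Real.log_exp]
    _ ≤ (n : ℝ) * ε + Real.log 4 := by
        have : Real.log 2 ≤ Real.log 4 := Real.log_le_log (by norm_num) (by norm_num)
        linarith
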